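/- Let A, Ω, B, Λ, C, Γ, D, Θ be block column vectors with entries in 𝒜 and zero first entry, let A₀, B₀, C₀, D₀ ∈ 𝒜, and set 𝐀 = T(A,Ω)+𝐀₀, 𝐁 = T(B,Λ)+𝐁₀, 𝐂 = T(C,Γ)+𝐂₀, 𝐃 = T(D,Θ)+𝐃₀. Then 𝐀𝐁 − 𝐂𝐃 is block Toeplitz if and only if AΛ* − Ω̃(B̃)* = CΘ* − Γ̃(D̃)* (an equality of n×n block matrices). -/

import Mathlib

open Matrix BigOperators

noncomputable section

/-- A block entry: a `d × d` complex matrix. -/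
abbrev Blk (d : ℕ) := Matrix (Fin d) (Fin d) ℂ

/-- An `n × n` block matrix with `d × d` complex matrix entries. -/
abbrev BlkMat (n d : ℕ) := Matrix (Fin n) (Fin n) (Blk d)

/-- A block column vector: an `n × 1` column of `d × d` complex matrices. -/
abbrev BlkVec (n d : ℕ) := Fin n → Blk d

/-- The block shift `𝐒`: identity blocks on the subdiagonal, zero elsewhere. -/
def Smat (n d : ℕ) : BlkMat n d :=
  Matrix.of fun i j => if (i : ℕ) = (j : ℕ) + 1 then (1 : Blk d) else 0

/-- `𝐒_X`: identity blocks on the subdiagonal, `X` in the corner entry `(1, n)`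
(zero-based `(0, n-1)`), zero elsewhere. -/
def SX (n d : ℕ) (X : Blk d) : BlkMat n d :=
  Matrix.of fun i j =>
    if (i : ℕ) = (j : ℕ) + 1 then (1 : Blk d)
    else if (i : ℕ) = 0 ∧ (j : ℕ) = n - 1 then X else 0

/-- A block matrix is block Toeplitz when entries depend only on the difference of indices. -/
def IsBlockToeplitz {n d : ℕ} (A : BlkMat n d) : Prop :=
  ∀ i j i' j' : Fin n, (i : ℤ) - (j : ℤ) = (i' : ℤ) - (j' : ℤ) → A i j = A i' j'

/-- `T(A, Ω)`: the block Toeplitz matrix with zero diagonal whose `(i,j)` entry is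
`A_{i-j}` for `i > j` and `(Ω_{j-i})ᴴ` for `i < j`. -/
def Tmat {n d : ℕ} (A Ω : BlkVec n d) : BlkMat n d :=
  Matrix.of fun i j =>
    if (j : ℕ) < (i : ℕ) then
      A ⟨(i : ℕ) - (j : ℕ), (Nat.sub_le _ _).trans_lt i.isLt⟩
    else if (i : ℕ) < (j : ℕ) then
      (Ω ⟨(j : ℕ) - (i : ℕ), (Nat.sub_le _ _).trans_lt j.isLt⟩)ᴴ
    else 0

/-- `Ã`: the block column vector with `Ã_0 = 0` and `Ã_k = (A_{n-k})ᴴ` for `1 ≤ k ≤ n-1`. -/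
def tilde {n d : ℕ} (A : BlkVec n d) : BlkVec n d :=
  fun k =>
    if h : (k : ℕ) = 0 then 0
    else (A ⟨n - (k : ℕ),
      Nat.sub_lt ((Nat.zero_le _).trans_lt k.isLt) (Nat.pos_of_ne_zero h)⟩)ᴴ

/-- `U V*`: the `n × n` block matrix with `(i,j)` entry `U_i (V_j)ᴴ`. -/
def outer {n d : ℕ} (U V : BlkVec n d) : BlkMat n d :=
  Matrix.of fun i j => U i * (V j)ᴴ

/-- `v P₀`: the block matrix whose first block column is `v` and all other entries `0`. -/
def colTimesP0 {n d : ℕ} (v : BlkVec n d) : BlkMat n d :=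
  Matrix.of fun i j => if (j : ℕ) = 0 then v i else 0

/-- `P₀* w`: the block matrix whose first block row is `w` and all other entries `0`. -/
def P0starRow {n d : ℕ} (w : BlkVec n d) : BlkMat n d :=
  Matrix.of fun i j => if (i : ℕ) = 0 then w j else 0

/-- The block column vector with `M` in its first entry and `0` elsewhere. -/
def e0 {n d : ℕ} (M : Blk d) : BlkVec n d :=
  fun i => if (i : ℕ) = 0 then M else 0

section AuxLemmas
variable {m d : ℕ}

lemma tmat_shift (A Ω : BlkVec (m+1) d) (A₀ : Blk d) (i j : Fin m) :
    (Tmat A Ω + Matrix.diagonal (fun _ => A₀) : BlkMat (m+1) d) i.succ j.succ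
      = (Tmat A Ω + Matrix.diagonal (fun _ => A₀) : BlkMat (m+1) d) i.castSucc j.castSucc := by
  simp only [Matrix.add_apply, Tmat, Matrix.of_apply, Fin.val_succ, Fin.coe_castSucc,
    Matrix.diagonal_apply, Fin.succ_inj, Fin.castSucc_inj, Nat.add_lt_add_iff_right,
    Nat.succ_sub_succ]

lemma prod_shift (A Ω B Λ : BlkVec (m+1) d) (A₀ B₀ : Blk d) (i j : Fin m) :
    ((Tmat A Ω + Matrix.diagonal fun _ => A₀) * (Tmat B Λ + Matrix.diagonal fun _ => B₀)
        : BlkMat (m+1) d) i.succ j.succ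
      - ((Tmat A Ω + Matrix.diagonal fun _ => A₀) * (Tmat B Λ + Matrix.diagonal fun _ => B₀)
        : BlkMat (m+1) d) i.castSucc j.castSucc
      = outer A Λ i.succ j.succ - outer (tilde Ω) (tilde B) i.succ j.succ := by
  have hT : True := trivial
  have hT' : True := trivial
  rw [Matrix.mul_apply, Matrix.mul_apply, Fin.sum_univ_succ, Fin.sum_univ_castSucc]
  have hg : ∀ k : Fin m, k ∈ Finset.univ → (Tmat A Ω + Matrix.diagonal fun _ => A₀ : BlkMat (m+1) d)
        i.succ k.succ * (Tmat B Λ + Matrix.diagonal fun _ => B₀ : BlkMat (m+1) d) k.succ j.succ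
      = (Tmat A Ω + Matrix.diagonal fun _ => A₀ : BlkMat (m+1) d) i.castSucc k.castSucc
        * (Tmat B Λ + Matrix.diagonal fun _ => B₀ : BlkMat (m+1) d) k.castSucc j.castSucc :=
    fun k _ => by rw [tmat_shift A Ω A₀ i k, tmat_shift B Λ B₀ k j]
  rw [Finset.sum_congr rfl hg]
  have h1 : (Tmat A Ω + Matrix.diagonal fun _ => A₀ : BlkMat (m+1) d) i.succ 0 = A i.succ := by
    simp only [Matrix.add_apply, Tmat, Matrix.of_apply]
    rw [if_pos (show ((0 : Fin (m+1)) : ℕ) < (i.succ : ℕ) by simp),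
      Matrix.diagonal_apply_ne _ (Fin.succ_ne_zero i), add_zero]
    exact congrArg A (Fin.ext (by simp))
  have h2 : (Tmat B Λ + Matrix.diagonal fun _ => B₀ : BlkMat (m+1) d) 0 j.succ = (Λ j.succ)ᴴ := by
    simp only [Matrix.add_apply, Tmat, Matrix.of_apply]
    rw [if_neg (show ¬ ((j.succ : Fin (m+1)) : ℕ) < ((0 : Fin (m+1)) : ℕ) by simp),
      if_pos (show ((0 : Fin (m+1)) : ℕ) < (j.succ : ℕ) by simp),
      Matrix.diagonal_apply_ne _ (Ne.symm (Fin.succ_ne_zero j)), add_zero]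
    exact congrArg _ (congrArg Λ (Fin.ext (by simp)))
  have h3 : (Tmat A Ω + Matrix.diagonal fun _ => A₀ : BlkMat (m+1) d) i.castSucc (Fin.last m)
      = tilde Ω i.succ := by
    simp only [Matrix.add_apply, Tmat, Matrix.of_apply, Fin.val_last, Fin.coe_castSucc]
    rw [if_neg (by omega : ¬ (m < (i : ℕ))), if_pos i.isLt,
      Matrix.diagonal_apply_ne _ (by exact fun h => absurd (Fin.ext_iff.mp h) (by simp; omega)),
      add_zero]
    simp only [tilde, Fin.val_succ, Nat.succ_ne_zero, not_false_iff, dif_neg,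
      Nat.succ_sub_succ]
  have h4 : (Tmat B Λ + Matrix.diagonal fun _ => B₀ : BlkMat (m+1) d) (Fin.last m) j.castSucc
      = (tilde B j.succ)ᴴ := by
    simp only [Matrix.add_apply, Tmat, Matrix.of_apply, Fin.val_last, Fin.coe_castSucc]
    rw [if_pos j.isLt,
      Matrix.diagonal_apply_ne _ (by exact fun h => absurd (Fin.ext_iff.mp h) (by simp; omega)),
      add_zero]
    simp only [tilde, Fin.val_succ, Nat.succ_ne_zero, not_false_iff, dif_neg,
      Nat.succ_sub_succ, conjTranspose_conjTranspose]
  rw [h1, h2, h3, h4]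
  simp only [outer, Matrix.of_apply]
  abel

lemma isBlockToeplitz_of_shift (M : BlkMat (m+1) d)
    (h : ∀ i j : Fin m, M i.succ j.succ = M i.castSucc j.castSucc) :
    IsBlockToeplitz M := by
  have key : ∀ N a b a' b' (ha : a < m+1) (hb : b < m+1) (ha' : a' < m+1) (hb' : b' < m+1),
      a + b' = a' + b → a + b + a' + b' ≤ N → M ⟨a, ha⟩ ⟨b, hb⟩ = M ⟨a', ha'⟩ ⟨b', hb'⟩ := by
    intro N
    induction N with
    | zero =>
      intro a b a' b' ha hb ha' hb' hd hN
      have : a = 0 ∧ b = 0 ∧ a' = 0 ∧ b' = 0 := by omega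
      obtain ⟨rfl, rfl, rfl, rfl⟩ := this
      rfl
    | succ N ih =>
      intro a b a' b' ha hb ha' hb' hd hN
      by_cases hab : 0 < a ∧ 0 < b
      · have ha1 : a - 1 < m := by omega
        have hb1 : b - 1 < m := by omega
        have e1 : (⟨a, ha⟩ : Fin (m+1)) = (⟨a-1, ha1⟩ : Fin m).succ := Fin.ext (by simp; omega)
        have e2 : (⟨b, hb⟩ : Fin (m+1)) = (⟨b-1, hb1⟩ : Fin m).succ := Fin.ext (by simp; omega)
        rw [e1, e2, h]
        have := ih (a-1) (b-1) a' b' (by omega) (by omega) ha' hb' (by omega) (by omega)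
        convert this using 2 <;> exact Fin.ext (by simp)
      · by_cases hab' : 0 < a' ∧ 0 < b'
        · have ha1 : a' - 1 < m := by omega
          have hb1 : b' - 1 < m := by omega
          have e1 : (⟨a', ha'⟩ : Fin (m+1)) = (⟨a'-1, ha1⟩ : Fin m).succ := Fin.ext (by simp; omega)
          have e2 : (⟨b', hb'⟩ : Fin (m+1)) = (⟨b'-1, hb1⟩ : Fin m).succ := Fin.ext (by simp; omega)
          rw [e1, e2, h]
          have := ih a b (a'-1) (b'-1) ha hb (by omega) (by omega) (by omega) (by omega)
          convert this using 2 <;> exact Fin.ext (by simp)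
        · have : a = a' ∧ b = b' := by omega
          obtain ⟨rfl, rfl⟩ := this
          rfl
  intro i j i' j' hij
  have hd : (i : ℕ) + (j' : ℕ) = (i' : ℕ) + (j : ℕ) := by omega
  have := key ((i:ℕ) + j + i' + j') i j i' j' i.isLt j.isLt i'.isLt j'.isLt hd le_rfl
  simpa using this

lemma outer_diff_row0 (A Λ Ω B : BlkVec (m+1) d) (hA0 : A 0 = 0) (j : Fin (m+1)) :
    (outer A Λ - outer (tilde Ω) (tilde B)) 0 j = 0 := by
  simp [outer, Matrix.sub_apply, hA0, tilde]

lemma outer_diff_col0 (A Λ Ω B : BlkVec (m+1) d) (hΛ0 : Λ 0 = 0) (i : Fin (m+1)) :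
    (outer A Λ - outer (tilde Ω) (tilde B)) i 0 = 0 := by
  simp [outer, Matrix.sub_apply, hΛ0, tilde]

end AuxLemmas

/-- `𝐀𝐁 − 𝐂𝐃` is block Toeplitz iff `AΛ* − Ω̃(B̃)* = CΘ* − Γ̃(D̃)*`. -/
theorem product_difference_toeplitz_iff (n d : ℕ) (hn : 0 < n) (hd : 0 < d)
    (𝒜 : Subalgebra ℂ (Blk d)) (hcomm : ∀ a ∈ 𝒜, ∀ b ∈ 𝒜, a * b = b * a)
    (A Ω B Λ C Γ D Θ : BlkVec n d)
    (hAmem : ∀ i, A i ∈ 𝒜) (hΩmem : ∀ i, Ω i ∈ 𝒜)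
    (hBmem : ∀ i, B i ∈ 𝒜) (hΛmem : ∀ i, Λ i ∈ 𝒜)
    (hCmem : ∀ i, C i ∈ 𝒜) (hΓmem : ∀ i, Γ i ∈ 𝒜)
    (hDmem : ∀ i, D i ∈ 𝒜) (hΘmem : ∀ i, Θ i ∈ 𝒜)
    (hA0 : A ⟨0, hn⟩ = 0) (hΩ0 : Ω ⟨0, hn⟩ = 0)
    (hB0 : B ⟨0, hn⟩ = 0) (hΛ0 : Λ ⟨0, hn⟩ = 0)
    (hC0 : C ⟨0, hn⟩ = 0) (hΓ0 : Γ ⟨0, hn⟩ = 0)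
    (hD0 : D ⟨0, hn⟩ = 0) (hΘ0 : Θ ⟨0, hn⟩ = 0)
    (A₀ B₀ C₀ D₀ : Blk d)
    (hA₀ : A₀ ∈ 𝒜) (hB₀ : B₀ ∈ 𝒜) (hC₀ : C₀ ∈ 𝒜) (hD₀ : D₀ ∈ 𝒜)
    (Am Bm Cm Dm : BlkMat n d)
    (hAm : Am = Tmat A Ω + Matrix.diagonal (fun _ => A₀))
    (hBm : Bm = Tmat B Λ + Matrix.diagonal (fun _ => B₀))
    (hCm : Cm = Tmat C Γ + Matrix.diagonal (fun _ => C₀))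
    (hDm : Dm = Tmat D Θ + Matrix.diagonal (fun _ => D₀)) :
    IsBlockToeplitz (Am * Bm - Cm * Dm) ↔
      outer A Λ - outer (tilde Ω) (tilde B)
        = outer C Θ - outer (tilde Γ) (tilde D) := by
  subst hAm hBm hCm hDm
  obtain ⟨m, rfl⟩ : ∃ m, n = m + 1 := ⟨n - 1, by omega⟩
  have h0 : (⟨0, hn⟩ : Fin (m+1)) = 0 := Fin.ext (by simp)
  rw [h0] at hA0 hΛ0 hC0 hΘ0
  have key : ∀ i j : Fin m,
      ((Tmat A Ω + Matrix.diagonal fun _ => A₀) * (Tmat B Λ + Matrix.diagonal fun _ => B₀)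
        - (Tmat C Γ + Matrix.diagonal fun _ => C₀) * (Tmat D Θ + Matrix.diagonal fun _ => D₀)
        : BlkMat (m+1) d) i.succ j.succ
      - ((Tmat A Ω + Matrix.diagonal fun _ => A₀) * (Tmat B Λ + Matrix.diagonal fun _ => B₀)
        - (Tmat C Γ + Matrix.diagonal fun _ => C₀) * (Tmat D Θ + Matrix.diagonal fun _ => D₀)
        : BlkMat (m+1) d) i.castSucc j.castSucc
      = ((outer A Λ - outer (tilde Ω) (tilde B)) - (outer C Θ - outer (tilde Γ) (tilde D))
        : BlkMat (m+1) d) i.succ j.succ := by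
    intro i j
    simp only [Matrix.sub_apply]
    rw [sub_sub_sub_comm, prod_shift A Ω B Λ A₀ B₀ i j, prod_shift C Γ D Θ C₀ D₀ i j,
      ← sub_sub_sub_comm]
  constructor
  · intro hT
    rw [← sub_eq_zero]
    refine Matrix.ext fun i j => ?_
    rcases Fin.eq_zero_or_eq_succ i with hi | ⟨i', rfl⟩
    · subst hi
      show (outer A Λ - outer (tilde Ω) (tilde B)) 0 j
          - (outer C Θ - outer (tilde Γ) (tilde D)) 0 j = 0
      rw [outer_diff_row0 A Λ Ω B hA0, outer_diff_row0 C Θ Γ D hC0, sub_self]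
    · rcases Fin.eq_zero_or_eq_succ j with hj | ⟨j', rfl⟩
      · subst hj
        show (outer A Λ - outer (tilde Ω) (tilde B)) i'.succ 0
            - (outer C Θ - outer (tilde Γ) (tilde D)) i'.succ 0 = 0
        rw [outer_diff_col0 A Λ Ω B hΛ0, outer_diff_col0 C Θ Γ D hΘ0, sub_self]
      · have h2 := key i' j'
        have hTe := hT i'.succ j'.succ i'.castSucc j'.castSucc
          (by simp only [Fin.val_succ, Fin.coe_castSucc]; push_cast; ring)
        rw [hTe, sub_self] at h2
        exact h2.symm
  · intro hE
    apply isBlockToeplitz_of_shift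
    intro i j
    have h2 := key i j
    rw [hE, sub_self, Matrix.zero_apply, sub_eq_zero] at h2
    exact h2
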